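/- Let g ≥ h ≥ 2 be integers. There is a constant C = C(g,h) > 0 such that for every infinite C_h[g]-set A ⊆ ℕ (with the C_h[g] condition taken in ℤ), liminf_{n → ∞} A(n)·(log n)^{1/h} / n^{1 - 1/h} ≤ C, where A(n) = |A ∩ {1, 2, …, n}| is the counting function of A. Equivalently, there are infinitely many n with A(n) ≤ C · n^{1 - 1/h} (log n)^{-1/h}. -/

import Mathlib

/-- `A ⊆ Γ` is a `C_h[g]`-set. -/
def IsChSet {Γ : Type*} [AddCommGroup Γ] (h g : ℕ) (A : Set Γ) : Prop :=
  ∀ X : Finset Γ, X.card = h → ∀ K : Finset Γ, K.card = g →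
    ∃ k ∈ K, ¬ (∀ x ∈ X, x + k ∈ A)

namespace Stmt11Aux

open Finset

lemma block_unique {L j j' x : ℕ} (hj : 1 ≤ j) (hj' : 1 ≤ j')
    (h1 : (j-1)*L < x) (h2 : x ≤ j*L) (h1' : (j'-1)*L < x) (h2' : x ≤ j'*L) : j = j' := by
  by_contra hne
  rcases Nat.lt_or_ge j j' with hlt | hge
  · have hle : j ≤ j' - 1 := by omega
    have := Nat.mul_le_mul_right L hle
    omega
  · have hlt : j' < j := by omega
    have hle : j' ≤ j - 1 := by omega
    have := Nat.mul_le_mul_right L hle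
    omega

lemma key_count (g h : ℕ) (hh : 2 ≤ h) (hg : 1 ≤ g) (A : Set ℕ) [DecidablePred (· ∈ A)]
    (hA : IsChSet h g ((fun a : ℕ => (a : ℤ)) '' A)) (L M : ℕ) :
    ∑ j ∈ Finset.Icc 1 M,
      (((Finset.Ioc ((j-1)*L) (j*L)).filter (· ∈ A)).card).choose h
      ≤ (g-1) * (L-1).choose (h-1) := by
  classical
  rcases Nat.eq_zero_or_pos L with rfl | hL
  · simp [Nat.choose_eq_zero_of_lt (show 0 < h by omega)]
  set B : ℕ → Finset ℕ := fun j => (Finset.Ioc ((j-1)*L) (j*L)).filter (· ∈ A) with hB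
  set U : Finset ((_ : ℕ) × Finset ℕ) :=
    (Finset.Icc 1 M).sigma (fun j => (B j).powersetCard h) with hUdef
  have hcardU : U.card = ∑ j ∈ Finset.Icc 1 M, ((B j).card).choose h := by
    rw [hUdef, Finset.card_sigma]
    exact Finset.sum_congr rfl fun j _ => Finset.card_powersetCard h (B j)
  -- membership facts
  have hmemU : ∀ p ∈ U, 1 ≤ p.1 ∧ p.2 ⊆ B p.1 ∧ p.2.card = h := by
    intro p hp
    rw [hUdef, Finset.mem_sigma] at hp
    obtain ⟨h1, h2⟩ := hp
    rw [Finset.mem_powersetCard] at h2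
    exact ⟨(Finset.mem_Icc.mp h1).1, h2.1, h2.2⟩
  have hne : ∀ p ∈ U, p.2.Nonempty := by
    intro p hp
    have := (hmemU p hp).2.2
    exact Finset.card_pos.mp (by omega)
  -- pattern map
  set pat : Finset ℕ → Finset ℕ := fun X => X.image (fun x => x - sInf (X : Set ℕ)) with hpat
  -- reconstruction
  have hrec : ∀ X : Finset ℕ, X.Nonempty →
      (pat X).image (fun z => z + sInf (X : Set ℕ)) = X := by
    intro X hX
    ext y
    simp only [hpat, Finset.mem_image, exists_exists_and_eq_and]
    constructor
    · rintro ⟨x, hx, rfl⟩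
      have : sInf (X : Set ℕ) ≤ x := Nat.sInf_le (by exact_mod_cast hx)
      rwa [Nat.sub_add_cancel this]
    · intro hy
      refine ⟨y, hy, ?_⟩
      have : sInf (X : Set ℕ) ≤ y := Nat.sInf_le (by exact_mod_cast hy)
      omega
  have hinf_mem : ∀ X : Finset ℕ, X.Nonempty → sInf (X : Set ℕ) ∈ X := by
    intro X hX
    have : (X : Set ℕ).Nonempty := by exact_mod_cast hX
    exact_mod_cast Nat.sInf_mem this
  have hpatcard : ∀ X : Finset ℕ, X.Nonempty → (pat X).card = X.card := by
    intro X hX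
    apply Finset.card_image_of_injOn
    intro x hx y hy hxy
    simp only at hxy
    have hx' : sInf (X : Set ℕ) ≤ x := Nat.sInf_le (by exact_mod_cast hx)
    have hy' : sInf (X : Set ℕ) ≤ y := Nat.sInf_le (by exact_mod_cast hy)
    omega
  have hzero : ∀ X : Finset ℕ, X.Nonempty → 0 ∈ pat X := by
    intro X hX
    simp only [hpat, Finset.mem_image]
    exact ⟨sInf (X : Set ℕ), hinf_mem X hX, Nat.sub_self _⟩
  -- elements of patterns are < L
  have hpatlt : ∀ p ∈ U, ∀ z ∈ pat p.2, z < L := by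
    intro p hp z hz
    simp only [hpat, Finset.mem_image] at hz
    obtain ⟨x, hx, rfl⟩ := hz
    have hxB : x ∈ B p.1 := (hmemU p hp).2.1 hx
    have hmB : sInf ((p.2 : Finset ℕ) : Set ℕ) ∈ B p.1 :=
      (hmemU p hp).2.1 (hinf_mem p.2 (hne p hp))
    rw [hB] at hxB hmB
    simp only [Finset.mem_filter, Finset.mem_Ioc] at hxB hmB
    have h1 : 1 ≤ p.1 := (hmemU p hp).1
    have hmul : (p.1 - 1) * L + L = p.1 * L := by
      have h2 : L ≤ p.1 * L := Nat.le_mul_of_pos_left L (by omega)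
      rw [Nat.sub_one_mul]
      omega
    omega
  -- fiber bound
  have hfib : ∀ P ∈ U.image (fun p => pat p.2),
      (U.filter (fun p => pat p.2 = P)).card ≤ g - 1 := by
    intro P hP
    set s' := U.filter (fun p => pat p.2 = P) with hs'
    by_contra hbig
    have hge : g ≤ s'.card := by omega
    -- anchors are injective on s'
    have hinj : Set.InjOn (fun p : (_ : ℕ) × Finset ℕ => sInf ((p.2 : Finset ℕ) : Set ℕ))
        (s' : Set ((_ : ℕ) × Finset ℕ)) := by
      intro p hp q hq heq
      simp only at heq
      simp only [hs', Finset.coe_filter, Set.mem_setOf_eq] at hp hq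
      obtain ⟨hpU, hpP⟩ := hp
      obtain ⟨hqU, hqP⟩ := hq
      have h2 : p.2 = q.2 := by
        have e1 := hrec p.2 (hne p hpU)
        have e2 := hrec q.2 (hne q hqU)
        rw [hpP] at e1
        rw [hqP] at e2
        rw [← e1, ← e2, heq]
      have h1 : p.1 = q.1 := by
        have hxp : sInf ((p.2 : Finset ℕ) : Set ℕ) ∈ B p.1 :=
          (hmemU p hpU).2.1 (hinf_mem p.2 (hne p hpU))
        have hxq : sInf ((q.2 : Finset ℕ) : Set ℕ) ∈ B q.1 := by
          exact (hmemU q hqU).2.1 (hinf_mem q.2 (hne q hqU))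
        rw [← h2] at hxq
        rw [hB] at hxp hxq
        simp only [Finset.mem_filter, Finset.mem_Ioc] at hxp hxq
        exact block_unique (hmemU p hpU).1 (hmemU q hqU).1 hxp.1.1 hxp.1.2 hxq.1.1 hxq.1.2
      rcases p with ⟨p1, p2⟩
      rcases q with ⟨q1, q2⟩
      simp_all
    have hcard_anch : g ≤ (s'.image (fun p => sInf ((p.2 : Finset ℕ) : Set ℕ))).card := by
      rwa [Finset.card_image_of_injOn hinj]
    obtain ⟨K1, hK1sub, hK1card⟩ := Finset.exists_subset_card_eq hcard_anch
    -- get a representative for P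
    have hs'ne : s'.Nonempty := Finset.card_pos.mp (by omega)
    obtain ⟨p0, hp0⟩ := hs'ne
    have hp0U : p0 ∈ U := (Finset.mem_filter.mp hp0).1
    have hp0P : pat p0.2 = P := (Finset.mem_filter.mp hp0).2
    have hPcard : P.card = h := by
      rw [← hp0P, hpatcard p0.2 (hne p0 hp0U), (hmemU p0 hp0U).2.2]
    -- apply the C_h[g] property
    set XZ : Finset ℤ := P.image (fun z : ℕ => (z : ℤ)) with hXZ
    set KZ : Finset ℤ := K1.image (fun z : ℕ => (z : ℤ)) with hKZ
    have hXZcard : XZ.card = h := by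
      rw [hXZ, Finset.card_image_of_injective _ (fun a b => by exact_mod_cast id), hPcard]
    have hKZcard : KZ.card = g := by
      rw [hKZ, Finset.card_image_of_injective _ (fun a b => by exact_mod_cast id), hK1card]
    obtain ⟨k, hkK, hknot⟩ := hA XZ hXZcard KZ hKZcard
    apply hknot
    intro x hx
    simp only [hXZ, Finset.mem_image] at hx
    obtain ⟨z, hz, rfl⟩ := hx
    simp only [hKZ, Finset.mem_image] at hkK
    obtain ⟨k0, hk0, rfl⟩ := hkK
    have hk0' : k0 ∈ s'.image (fun p => sInf ((p.2 : Finset ℕ) : Set ℕ)) := hK1sub hk0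
    simp only [Finset.mem_image] at hk0'
    obtain ⟨q, hq, hqk⟩ := hk0'
    have hqU : q ∈ U := (Finset.mem_filter.mp hq).1
    have hqP : pat q.2 = P := (Finset.mem_filter.mp hq).2
    have hq2 : q.2 = P.image (fun z => z + k0) := by
      rw [← hqk, ← hqP, hrec q.2 (hne q hqU)]
    have hmem2 : z + k0 ∈ q.2 := by
      rw [hq2]
      exact Finset.mem_image_of_mem _ hz
    have hzA : (z + k0 : ℕ) ∈ A := by
      have := (hmemU q hqU).2.1 hmem2
      rw [hB] at this
      exact (Finset.mem_filter.mp this).2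
    refine ⟨z + k0, hzA, ?_⟩
    push_cast
    ring
  -- image bound
  have himg : (U.image (fun p => pat p.2)).card ≤ (L-1).choose (h-1) := by
    have hmaps : ∀ P ∈ U.image (fun p => pat p.2),
        P.erase 0 ∈ (Finset.Icc 1 (L-1)).powersetCard (h-1) := by
      intro P hP
      simp only [Finset.mem_image] at hP
      obtain ⟨p, hp, rfl⟩ := hP
      rw [Finset.mem_powersetCard]
      constructor
      · intro z hz
        have hz1 := Finset.mem_erase.mp hz
        have := hpatlt p hp z hz1.2
        rw [Finset.mem_Icc]
        omega
      · rw [Finset.card_erase_of_mem (hzero p.2 (hne p hp)),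
          hpatcard p.2 (hne p hp), (hmemU p hp).2.2]
    have hinj : Set.InjOn (fun P : Finset ℕ => P.erase 0)
        ((U.image (fun p => pat p.2)) : Set (Finset ℕ)) := by
      intro P hP Q hQ heq
      simp only at heq
      simp only [Finset.coe_image, Set.mem_image, Finset.mem_coe] at hP hQ
      obtain ⟨p, hp, rfl⟩ := hP
      obtain ⟨q, hq, rfl⟩ := hQ
      have h0P := hzero p.2 (hne p hp)
      have h0Q := hzero q.2 (hne q hq)
      rw [← Finset.insert_erase h0P, ← Finset.insert_erase h0Q, heq]
    calc (U.image (fun p => pat p.2)).card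
        ≤ ((Finset.Icc 1 (L-1)).powersetCard (h-1)).card :=
          Finset.card_le_card_of_injOn _ hmaps hinj
      _ = (L-1).choose (h-1) := by
          rw [Finset.card_powersetCard, Nat.card_Icc]
          simp
  -- conclude
  calc ∑ j ∈ Finset.Icc 1 M, ((B j).card).choose h
      = U.card := hcardU.symm
    _ ≤ (g-1) * (U.image (fun p => pat p.2)).card :=
        Finset.card_le_mul_card_image U (g-1) hfib
    _ ≤ (g-1) * (L-1).choose (h-1) := Nat.mul_le_mul_left _ himg

lemma prefix_sum (A : Set ℕ) [DecidablePred (· ∈ A)] (N : ℕ) :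
    ∀ J : ℕ, ((Finset.Ioc 0 (J*N)).filter (· ∈ A)).card
      = ∑ j ∈ Finset.Icc 1 J, ((Finset.Ioc ((j-1)*N) (j*N)).filter (· ∈ A)).card := by
  intro J
  induction J with
  | zero => simp
  | succ J ih =>
      rw [Finset.sum_Icc_succ_top (by omega : 1 ≤ J + 1), ← ih]
      have hsplit : Finset.Ioc 0 ((J+1)*N) = Finset.Ioc 0 (J*N) ∪ Finset.Ioc (J*N) ((J+1)*N) :=
        (Finset.Ioc_union_Ioc_eq_Ioc (Nat.zero_le _)
          (Nat.mul_le_mul_right N (Nat.le_succ J))).symm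
      have hdisj : Disjoint ((Finset.Ioc 0 (J*N)).filter (· ∈ A))
          ((Finset.Ioc (J*N) ((J+1)*N)).filter (· ∈ A)) := by
        apply Finset.disjoint_left.mpr
        intro x hx hx'
        simp only [Finset.mem_filter, Finset.mem_Ioc] at hx hx'
        omega
      rw [hsplit, Finset.filter_union, Finset.card_union_of_disjoint hdisj]
      norm_num

lemma pow_le_choose_bound (h f : ℕ) (hh : 2 ≤ h) :
    f ^ h ≤ 2^h * Nat.factorial h * f.choose h + (2*h)^(h-1) * f := by
  rcases lt_or_ge f (2*h) with hf | hf
  · have h1 : f ^ h = f^(h-1) * f := by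
      rw [← pow_succ]
      congr 1
      omega
    have h2 : f^(h-1) ≤ (2*h)^(h-1) := Nat.pow_le_pow_left (by omega) _
    calc f ^ h = f^(h-1) * f := h1
      _ ≤ (2*h)^(h-1) * f := Nat.mul_le_mul_right f h2
      _ ≤ 2^h * Nat.factorial h * f.choose h + (2*h)^(h-1) * f := Nat.le_add_left _ _
  · have h1 : f ≤ 2*(f - h) := by omega
    have h2 : (f-h)^h ≤ Nat.factorial h * f.choose h := by
      calc (f-h)^h ≤ (f+1-h)^h := Nat.pow_le_pow_left (by omega) h
        _ ≤ f.descFactorial h := Nat.pow_sub_le_descFactorial f h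
        _ = Nat.factorial h * f.choose h := Nat.descFactorial_eq_factorial_mul_choose f h
    calc f ^ h ≤ (2*(f-h))^h := Nat.pow_le_pow_left h1 h
      _ = 2^h * (f-h)^h := mul_pow 2 (f-h) h
      _ ≤ 2^h * (Nat.factorial h * f.choose h) := Nat.mul_le_mul_left _ h2
      _ = 2^h * Nat.factorial h * f.choose h := (mul_assoc _ _ _).symm
      _ ≤ _ := Nat.le_add_right _ _

lemma count_bound (g h : ℕ) (hh : 2 ≤ h) (hg : h ≤ g) {a N : ℕ} (hN : 1 ≤ N)
    (hc : a.choose h ≤ (g-1) * (N*N-1).choose (h-1)) : a ≤ 2*h*g*N^(h-1) + h := by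
  rcases le_or_gt a h with hah | hah
  · have : h ≤ 2*h*g*N^(h-1) + h := Nat.le_add_left _ _
    omega
  have hkey : (a - h)^h ≤ (2*h*g*N^(h-1))^h := by
    calc (a-h)^h ≤ (a+1-h)^h := Nat.pow_le_pow_left (by omega) h
      _ ≤ a.descFactorial h := Nat.pow_sub_le_descFactorial a h
      _ = Nat.factorial h * a.choose h := Nat.descFactorial_eq_factorial_mul_choose a h
      _ ≤ Nat.factorial h * ((g-1) * (N*N-1).choose (h-1)) := Nat.mul_le_mul_left _ hc
      _ ≤ h^h * (g * (N*N)^(h-1)) := by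
          apply Nat.mul_le_mul (Nat.factorial_le_pow h)
          apply Nat.mul_le_mul (by omega)
          calc (N*N-1).choose (h-1) ≤ (N*N-1)^(h-1) := Nat.choose_le_pow _ _
            _ ≤ (N*N)^(h-1) := Nat.pow_le_pow_left (by omega) _
      _ ≤ (2*h*g*N^(h-1))^h := by
          have e1 : (2*h*g*N^(h-1))^h = 2^h * h^h * g^h * N^((h-1)*h) := by
            rw [mul_pow, mul_pow, mul_pow, ← pow_mul]
          rw [e1]
          have e2 : (N*N)^(h-1) = N^(2*(h-1)) := by
            rw [show N*N = N^2 by ring, ← pow_mul]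
          rw [e2]
          have h3 : g ≤ g^h := Nat.le_self_pow (by omega) g
          have h4 : N^(2*(h-1)) ≤ N^((h-1)*h) := Nat.pow_le_pow_right hN (by nlinarith)
          calc h^h * (g * N^(2*(h-1))) ≤ h^h * (g^h * N^((h-1)*h)) :=
                Nat.mul_le_mul_left _ (Nat.mul_le_mul h3 h4)
            _ = 1 * (h ^ h * g ^ h * N ^ ((h - 1) * h)) := by ring
            _ ≤ 2^h * (h ^ h * g ^ h * N ^ ((h - 1) * h)) :=
                Nat.mul_le_mul_right _ Nat.one_le_two_pow
            _ = 2 ^ h * h ^ h * g ^ h * N ^ ((h - 1) * h) := by ring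
  have : a - h ≤ 2*h*g*N^(h-1) := by
    have := (Nat.pow_le_pow_iff_left (show h ≠ 0 by omega)).mp hkey
    exact this
  omega

lemma harmonic_upper : ∀ N : ℕ, ∑ j ∈ Finset.Icc 1 N, ((j:ℝ))⁻¹ ≤ 1 + Real.log N := by
  intro N
  induction N with
  | zero => simp
  | succ N ih =>
      rcases Nat.eq_zero_or_pos N with rfl | hN
      · simp
      rw [Finset.sum_Icc_succ_top (by omega : 1 ≤ N + 1)]
      have hpos : (0:ℝ) < N := by exact_mod_cast hN
      have hlog : ((N:ℝ)+1)⁻¹ ≤ Real.log (N+1) - Real.log N := by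
        have hkey := Real.log_le_sub_one_of_pos
          (show (0:ℝ) < (N:ℝ)/((N:ℝ)+1) by positivity)
        rw [Real.log_div (by positivity) (by positivity)] at hkey
        have : (N:ℝ)/((N:ℝ)+1) - 1 = -(((N:ℝ)+1)⁻¹) := by
          field_simp
          ring
        rw [this] at hkey
        linarith
      have hcast : ((N+1 : ℕ):ℝ) = (N:ℝ)+1 := by push_cast; ring
      rw [hcast]
      linarith

end Stmt11Aux

set_option maxHeartbeats 1000000 in
theorem stmt11 (g h : ℕ) (hh : 2 ≤ h) (hgh : h ≤ g) :
    ∃ C : ℝ, 0 < C ∧ ∀ A : Set ℕ, A.Infinite →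
      IsChSet h g ((fun a : ℕ => (a : ℤ)) '' A) →
      ∀ m : ℕ, ∃ n : ℕ, m ≤ n ∧ 2 ≤ n ∧
        ((A ∩ Set.Icc 1 n).ncard : ℝ) ≤
          C * (n : ℝ) ^ (1 - (1 : ℝ) / h) * (Real.log n) ^ (-(1 : ℝ) / h) := by
  classical
  set E : ℕ := 2^h * Nat.factorial h * (g-1) + (2*h)^(h-1) * (2*h*g + h) with hE
  have hE1 : 1 ≤ E := by
    have h1 : 0 < (2*h)^(h-1) * (2*h*g + h) :=
      Nat.mul_pos (pow_pos (by omega) _) (by omega)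
    have h2 : (2*h)^(h-1) * (2*h*g + h) ≤ E := Nat.le_add_left _ _
    omega
  refine ⟨32*(E:ℝ) + 1, by positivity, ?_⟩
  intro A _hInf hA m
  by_contra hcon
  push_neg at hcon
  haveI : DecidablePred (· ∈ A) := Classical.decPred _
  set N : ℕ := max m 3 with hNdef
  have hN3 : 3 ≤ N := le_max_right m 3
  have hNm : m ≤ N := le_max_left m 3
  set K : ℕ := Nat.log 2 N with hKdef
  have h2K : 2^K ≤ N := Nat.pow_log_le_self 2 (by omega)
  have h2K' : N < 2^(K+1) := Nat.lt_pow_succ_log_self (by norm_num) N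
  -- basic real facts
  have hh1 : (1:ℝ) < (h:ℝ) := by exact_mod_cast (by omega : 1 < h)
  have hhpos : (0:ℝ) < (h:ℝ) := by linarith
  have heh1 : (1:ℝ)/(h:ℝ) ≤ 1/2 :=
    one_div_le_one_div_of_le (by norm_num) (by exact_mod_cast hh)
  have heh0 : (0:ℝ) < 1/(h:ℝ) := by positivity
  set Lg : ℝ := Real.log N with hLgdef
  have hLg1 : 1 ≤ Lg := by
    have hexp : Real.exp 1 < (N:ℝ) := by
      calc Real.exp 1 < 2.7182818286 := Real.exp_one_lt_d9
        _ ≤ 3 := by norm_num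
        _ ≤ (N:ℝ) := by exact_mod_cast hN3
    have := (Real.lt_log_iff_exp_lt (by positivity : (0:ℝ) < (N:ℝ))).2 hexp
    rw [hLgdef]; linarith
  have hLgpos : 0 < Lg := by linarith
  -- counting functions
  set f : ℕ → ℕ := fun j => ((Finset.Ioc ((j-1)*N) (j*N)).filter (· ∈ A)).card with hfdef
  set cnt : ℕ → ℕ := fun x => ((Finset.Ioc 0 x).filter (· ∈ A)).card with hcntdef
  have hncard : ∀ n : ℕ, (A ∩ Set.Icc 1 n).ncard = cnt n := by
    intro n
    have hset : A ∩ Set.Icc 1 n = ↑((Finset.Ioc 0 n).filter (· ∈ A)) := by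
      ext x
      simp only [Set.mem_inter_iff, Set.mem_Icc, Finset.coe_filter, Finset.mem_Ioc,
        Set.mem_setOf_eq]
      constructor
      · rintro ⟨hxA, hx1, hx2⟩; exact ⟨⟨by omega, hx2⟩, hxA⟩
      · rintro ⟨⟨hx1, hx2⟩, hxA⟩; exact ⟨hxA, by omega, hx2⟩
    rw [hset, Set.ncard_coe_finset]
  have hpre : ∀ J : ℕ, cnt (J*N) = ∑ j ∈ Finset.Icc 1 J, f j :=
    fun J => Stmt11Aux.prefix_sum A N J
  -- lower bound from the negated conclusion
  have hlow : ∀ n : ℕ, N ≤ n → n ≤ N*N →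
      (32*(E:ℝ)+1) * (2*Lg)^(-(1:ℝ)/h) * (n:ℝ)^(1-(1:ℝ)/h) ≤ (cnt n : ℝ) := by
    intro n hn1 hn2
    have hn2' : 2 ≤ n := by omega
    have hlogn_pos : 0 < Real.log n :=
      Real.log_pos (by exact_mod_cast (by omega : 1 < n))
    have hlogn_le : Real.log n ≤ 2*Lg := by
      have h1 : (n:ℝ) ≤ (N:ℝ)*(N:ℝ) := by exact_mod_cast hn2
      have h2 : Real.log n ≤ Real.log ((N:ℝ)*(N:ℝ)) :=
        Real.log_le_log (by positivity) h1
      rw [Real.log_mul (by positivity) (by positivity)] at h2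
      rw [hLgdef]; linarith
    have hcmp : ((2*Lg):ℝ)^(-(1:ℝ)/h) ≤ (Real.log n)^(-(1:ℝ)/h) :=
      Real.rpow_le_rpow_of_nonpos hlogn_pos hlogn_le
        (by rw [neg_div]; linarith)
    have hmain := hcon n (le_trans hNm hn1) hn2'
    rw [hncard n] at hmain
    have hnpow : (0:ℝ) ≤ (n:ℝ)^(1-(1:ℝ)/h) :=
      Real.rpow_nonneg (by positivity) _
    calc (32*(E:ℝ)+1) * (2*Lg)^(-(1:ℝ)/h) * (n:ℝ)^(1-(1:ℝ)/h)
        = (32*(E:ℝ)+1) * (n:ℝ)^(1-(1:ℝ)/h) * (2*Lg)^(-(1:ℝ)/h) := by ring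
      _ ≤ (32*(E:ℝ)+1) * (n:ℝ)^(1-(1:ℝ)/h) * (Real.log n)^(-(1:ℝ)/h) := by
          apply mul_le_mul_of_nonneg_left hcmp
          positivity
      _ ≤ (cnt n : ℝ) := le_of_lt hmain
  -- capacity bounds (natural numbers)
  have hcap1 : ∑ j ∈ Finset.Icc 1 N, (f j).choose h ≤ (g-1) * N^(h-1) := by
    refine le_trans (Stmt11Aux.key_count g h hh (by omega) A hA N N)
      (Nat.mul_le_mul_left _ ?_)
    calc (N-1).choose (h-1) ≤ (N-1)^(h-1) := Nat.choose_le_pow _ _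
      _ ≤ N^(h-1) := Nat.pow_le_pow_left (by omega) _
  have hcnt2 : (cnt (N*N)).choose h ≤ (g-1) * (N*N-1).choose (h-1) := by
    have hkc := Stmt11Aux.key_count g h hh (by omega) A hA (N*N) 1
    rw [Finset.Icc_self, Finset.sum_singleton] at hkc
    simpa using hkc
  have hcntNN : cnt (N*N) ≤ (2*h*g + h) * N^(h-1) := by
    have h1 := Stmt11Aux.count_bound g h hh hgh (by omega : 1 ≤ N) hcnt2
    have h2 : 0 < N^(h-1) := pow_pos (by omega) _
    have h3 : h ≤ h * N^(h-1) := Nat.le_mul_of_pos_right h h2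
    have h4 : (2*h*g + h) * N^(h-1) = 2*h*g*N^(h-1) + h*N^(h-1) := by ring
    omega
  have hcapNat : ∑ j ∈ Finset.Icc 1 N, (f j)^h ≤ E * N^(h-1) := by
    calc ∑ j ∈ Finset.Icc 1 N, (f j)^h
        ≤ ∑ j ∈ Finset.Icc 1 N,
            (2^h * Nat.factorial h * (f j).choose h + (2*h)^(h-1) * (f j)) :=
          Finset.sum_le_sum (fun j _ => Stmt11Aux.pow_le_choose_bound h (f j) hh)
      _ = 2^h * Nat.factorial h * (∑ j ∈ Finset.Icc 1 N, (f j).choose h)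
            + (2*h)^(h-1) * (∑ j ∈ Finset.Icc 1 N, f j) := by
          rw [Finset.sum_add_distrib, Finset.mul_sum, Finset.mul_sum]
      _ ≤ 2^h * Nat.factorial h * ((g-1) * N^(h-1))
            + (2*h)^(h-1) * ((2*h*g + h) * N^(h-1)) := by
          apply Nat.add_le_add
          · exact Nat.mul_le_mul_left _ hcap1
          · apply Nat.mul_le_mul_left _
            rw [← hpre N]
            exact hcntNN
      _ = E * N^(h-1) := by rw [hE]; ring
  -- capacity bound (real)
  have hsumfh_nonneg : (0:ℝ) ≤ ∑ j ∈ Finset.Icc 1 N, ((f j : ℝ))^((h:ℝ)) :=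
    Finset.sum_nonneg fun j _ => Real.rpow_nonneg (Nat.cast_nonneg _) _
  have hcapR : ∑ j ∈ Finset.Icc 1 N, ((f j : ℝ))^((h:ℝ)) ≤ (E:ℝ) * (N:ℝ)^((h:ℝ)-1) := by
    have hcast : ∀ j ∈ Finset.Icc 1 N, ((f j : ℝ))^((h:ℝ)) = (((f j)^h : ℕ) : ℝ) := by
      intro j _
      rw [Real.rpow_natCast]
      push_cast
      ring
    rw [Finset.sum_congr rfl hcast, ← Nat.cast_sum]
    have h1 : ((∑ j ∈ Finset.Icc 1 N, (f j)^h : ℕ) : ℝ) ≤ ((E * N^(h-1) : ℕ):ℝ) := by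
      exact_mod_cast hcapNat
    refine le_trans h1 ?_
    rw [Nat.cast_mul, Nat.cast_pow]
    have h2 : ((N:ℝ))^((h-1 : ℕ)) = (N:ℝ)^((h:ℝ)-1) := by
      rw [← Real.rpow_natCast (N:ℝ) (h-1)]
      congr 1
      have h3 : 1 ≤ h := by omega
      push_cast [h3]
      ring
    rw [h2]
  -- geometric weights
  set τ : ℝ := 1/(h:ℝ) - 1 with hτdef
  have hτneg : τ < 0 := by rw [hτdef]; linarith
  have hτhalf : τ ≤ -(1/2) := by rw [hτdef]; linarith
  set r : ℝ := (2:ℝ)^τ with hrdef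
  have hr0 : 0 < r := Real.rpow_pos_of_pos (by norm_num) τ
  have hr1 : r < 1 := Real.rpow_lt_one_of_one_lt_of_neg (by norm_num) hτneg
  have hr34 : r ≤ 3/4 := by
    have h1 : r ≤ (2:ℝ)^(-(1/2):ℝ) := by
      rw [hrdef]
      exact Real.rpow_le_rpow_of_exponent_le (by norm_num) hτhalf
    have h2 : (2:ℝ)^(-(1/2):ℝ) ≤ 3/4 := by
      rw [Real.rpow_neg (by norm_num)]
      have hpos : 0 < (2:ℝ)^((1/2):ℝ) := Real.rpow_pos_of_pos (by norm_num) _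
      have hsq : ((2:ℝ)^((1/2):ℝ))^(2:ℕ) = 2 := by
        rw [← Real.rpow_natCast ((2:ℝ)^((1/2):ℝ)) 2, ← Real.rpow_mul (by norm_num)]
        norm_num
      have h43 : (4:ℝ)/3 ≤ (2:ℝ)^((1/2):ℝ) := by nlinarith [hpos, hsq]
      have h3 : ((2:ℝ)^((1/2):ℝ))⁻¹ ≤ ((4:ℝ)/3)⁻¹ :=
        inv_anti₀ (by norm_num) h43
      calc ((2:ℝ)^((1/2):ℝ))⁻¹ ≤ ((4:ℝ)/3)⁻¹ := h3
        _ = 3/4 := by norm_num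
    linarith
  -- pow/rpow identity for weights
  have hpow_rpow : ∀ i : ℕ, ((2:ℝ)^(i:ℕ))^τ = r^i := by
    intro i
    rw [hrdef, ← Real.rpow_natCast (2:ℝ) i, ← Real.rpow_mul (by norm_num),
      ← Real.rpow_natCast ((2:ℝ)^τ) i, ← Real.rpow_mul (by norm_num), mul_comm]
  have hlam : ∀ i : ℕ, r^i * (((2^i*N : ℕ):ℝ))^(1-(1:ℝ)/h) = (N:ℝ)^(1-(1:ℝ)/h) := by
    intro i
    have hc : ((2^i*N : ℕ):ℝ) = (2:ℝ)^(i:ℕ) * (N:ℝ) := by push_cast; ring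
    rw [hc, Real.mul_rpow (by positivity) (by positivity)]
    have h1 : ((2:ℝ)^(i:ℕ))^(1-(1:ℝ)/h) = ((2:ℝ)^(1-(1:ℝ)/h))^i := by
      rw [← Real.rpow_natCast (2:ℝ) i, ← Real.rpow_mul (by norm_num),
        ← Real.rpow_natCast ((2:ℝ)^(1-(1:ℝ)/h)) i, ← Real.rpow_mul (by norm_num),
        mul_comm]
    rw [h1, hrdef, ← mul_assoc, ← mul_pow, ← Real.rpow_add (by norm_num : (0:ℝ) < 2)]
    have h2 : τ + (1-(1:ℝ)/h) = 0 := by rw [hτdef]; ring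
    rw [h2, Real.rpow_zero, one_pow, one_mul]
  -- the sum S
  set S : ℝ := ∑ i ∈ Finset.range (K+1), r^i * (cnt (2^i*N) : ℝ) with hSdef
  have hKLg : Lg ≤ ((K:ℝ)+1) := by
    have h1 : (N:ℝ) ≤ (2:ℝ)^(K+1) := by exact_mod_cast le_of_lt h2K'
    have h2 : Lg ≤ Real.log ((2:ℝ)^(K+1)) := by
      rw [hLgdef]
      exact Real.log_le_log (by positivity) h1
    rw [Real.log_pow] at h2
    have h3 : Real.log 2 ≤ 1 := by
      have := Real.log_two_lt_d9
      linarith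
    have h4 : ((K+1 : ℕ):ℝ) * Real.log 2 ≤ ((K:ℝ)+1) * 1 := by
      apply mul_le_mul (by push_cast; linarith) h3 (Real.log_nonneg (by norm_num))
        (by positivity)
    calc Lg ≤ ((K+1 : ℕ):ℝ) * Real.log 2 := h2
      _ ≤ ((K:ℝ)+1) * 1 := h4
      _ = (K:ℝ)+1 := by ring
  have hSlow : ((32*(E:ℝ)+1) * (2*Lg)^(-(1:ℝ)/h) * (N:ℝ)^(1-(1:ℝ)/h)) * Lg ≤ S := by
    have hconst_nonneg : (0:ℝ) ≤ (32*(E:ℝ)+1) * (2*Lg)^(-(1:ℝ)/h) * (N:ℝ)^(1-(1:ℝ)/h) := by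
      have hp1 := Real.rpow_nonneg (show (0:ℝ) ≤ 2*Lg by linarith) (-(1:ℝ)/h)
      have hp2 := Real.rpow_nonneg (show (0:ℝ) ≤ (N:ℝ) by positivity) (1-(1:ℝ)/h)
      positivity
    have hterm : ∀ i ∈ Finset.range (K+1),
        (32*(E:ℝ)+1) * (2*Lg)^(-(1:ℝ)/h) * (N:ℝ)^(1-(1:ℝ)/h)
          ≤ r^i * (cnt (2^i*N) : ℝ) := by
      intro i hi
      have hiK : i ≤ K := Nat.lt_succ_iff.mp (Finset.mem_range.mp hi)
      have h2i : 2^i ≤ N := le_trans (Nat.pow_le_pow_right (by norm_num) hiK) h2K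
      have hn1 : N ≤ 2^i*N := Nat.le_mul_of_pos_left N (pow_pos (by norm_num) i)
      have hn2 : 2^i*N ≤ N*N := Nat.mul_le_mul_right N h2i
      have hl := hlow (2^i*N) hn1 hn2
      have h3 := mul_le_mul_of_nonneg_left hl (le_of_lt (pow_pos hr0 i))
      calc (32*(E:ℝ)+1) * (2*Lg)^(-(1:ℝ)/h) * (N:ℝ)^(1-(1:ℝ)/h)
          = (32*(E:ℝ)+1) * (2*Lg)^(-(1:ℝ)/h) * (r^i * ((2^i*N:ℕ):ℝ)^(1-(1:ℝ)/h)) := by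
            rw [hlam i]
        _ = r^i * ((32*(E:ℝ)+1) * (2*Lg)^(-(1:ℝ)/h) * ((2^i*N:ℕ):ℝ)^(1-(1:ℝ)/h)) := by
            ring
        _ ≤ r^i * (cnt (2^i*N) : ℝ) := h3
    have hsum := Finset.sum_le_sum hterm
    rw [Finset.sum_const, Finset.card_range] at hsum
    have h5 : (K+1) • ((32*(E:ℝ)+1) * (2*Lg)^(-(1:ℝ)/h) * (N:ℝ)^(1-(1:ℝ)/h))
        = ((K:ℝ)+1) * ((32*(E:ℝ)+1) * (2*Lg)^(-(1:ℝ)/h) * (N:ℝ)^(1-(1:ℝ)/h)) := by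
      rw [nsmul_eq_mul]
      push_cast
      ring
    rw [h5] at hsum
    have h4 := mul_le_mul_of_nonneg_left hKLg hconst_nonneg
    rw [hSdef]
    calc ((32*(E:ℝ)+1) * (2*Lg)^(-(1:ℝ)/h) * (N:ℝ)^(1-(1:ℝ)/h)) * Lg
        ≤ ((32*(E:ℝ)+1) * (2*Lg)^(-(1:ℝ)/h) * (N:ℝ)^(1-(1:ℝ)/h)) * ((K:ℝ)+1) := h4
      _ = ((K:ℝ)+1) * ((32*(E:ℝ)+1) * (2*Lg)^(-(1:ℝ)/h) * (N:ℝ)^(1-(1:ℝ)/h)) := by ring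
      _ ≤ ∑ i ∈ Finset.range (K+1), r^i * (cnt (2^i*N) : ℝ) := hsum
  -- exchange sums
  set Lam : ℕ → ℝ := fun j => ∑ i ∈ Finset.range (K+1), if j ≤ 2^i then r^i else 0
    with hLamdef
  have hLam0 : ∀ j, 0 ≤ Lam j := by
    intro j
    apply Finset.sum_nonneg
    intro i _
    split
    · positivity
    · exact le_refl 0
  have hexch : S = ∑ j ∈ Finset.Icc 1 N, Lam j * (f j : ℝ) := by
    rw [hSdef]
    have h1 : ∀ i ∈ Finset.range (K+1),
        r^i * (cnt (2^i*N) : ℝ)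
          = ∑ j ∈ Finset.Icc 1 N, (if j ≤ 2^i then r^i * (f j:ℝ) else 0) := by
      intro i hi
      have hiK : i ≤ K := Nat.lt_succ_iff.mp (Finset.mem_range.mp hi)
      have h2i : 2^i ≤ N := le_trans (Nat.pow_le_pow_right (by norm_num) hiK) h2K
      rw [hpre (2^i), Nat.cast_sum, Finset.mul_sum]
      have hIcc : Finset.Icc 1 (2^i) = (Finset.Icc 1 N).filter (fun j => j ≤ 2^i) := by
        ext j
        simp only [Finset.mem_Icc, Finset.mem_filter]
        omega
      rw [hIcc, Finset.sum_filter]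
    rw [Finset.sum_congr rfl h1, Finset.sum_comm]
    apply Finset.sum_congr rfl
    intro j _
    rw [Finset.sum_mul]
    apply Finset.sum_congr rfl
    intro i _
    split
    · rfl
    · rw [zero_mul]
  -- bound on Lam
  have hLamUB : ∀ j ∈ Finset.Icc 1 N, Lam j ≤ 4 * ((j:ℝ))^τ := by
    intro j hj
    have hj1 : 1 ≤ j := (Finset.mem_Icc.mp hj).1
    have hjpos : (0:ℝ) < (j:ℝ) := by exact_mod_cast hj1
    set i0 : ℕ := Nat.clog 2 j with hi0def
    have hstep1 : Lam j ≤ ∑ i ∈ Finset.Ico i0 (K+1), r^i := by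
      show (∑ i ∈ Finset.range (K+1), if j ≤ 2^i then r^i else 0)
        ≤ ∑ i ∈ Finset.Ico i0 (K+1), r^i
      rw [← Finset.sum_filter]
      apply Finset.sum_le_sum_of_subset_of_nonneg
      · intro i hi
        simp only [Finset.mem_filter, Finset.mem_range] at hi
        simp only [Finset.mem_Ico]
        refine ⟨?_, hi.1⟩
        rw [hi0def]
        exact (Nat.clog_le_iff_le_pow (by norm_num)).mpr hi.2
      · intro i _ _
        positivity
    have hstep2 : ∑ i ∈ Finset.Ico i0 (K+1), r^i ≤ r^i0 * (1/(1-r)) := by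
      rw [Finset.sum_Ico_eq_sum_range]
      have h1 : ∀ d ∈ Finset.range (K+1-i0), r^(i0+d) = r^i0 * r^d := by
        intro d _
        rw [pow_add]
      rw [Finset.sum_congr rfl h1, ← Finset.mul_sum]
      apply mul_le_mul_of_nonneg_left _ (le_of_lt (pow_pos hr0 i0))
      rw [geom_sum_eq (ne_of_lt hr1)]
      have h3 : 0 < 1 - r := by linarith
      have h2 : (r^(K+1-i0) - 1)/(r-1) = (1 - r^(K+1-i0))/(1-r) := by
        rw [div_eq_div_iff (by linarith) (by linarith)]
        ring
      rw [h2]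
      have h4 : 1 - r^(K+1-i0) ≤ 1 := by
        nlinarith [pow_nonneg (le_of_lt hr0) (K+1-i0)]
      exact (div_le_div_iff_of_pos_right h3).mpr h4
    have hA2 : r^i0 ≤ ((j:ℝ))^τ := by
      have hjle : (j:ℝ) ≤ (2:ℝ)^(i0:ℕ) := by
        have := Nat.le_pow_clog (by norm_num : 1 < 2) j
        rw [hi0def]
        exact_mod_cast this
      have hcmp := Real.rpow_le_rpow_of_nonpos hjpos hjle (le_of_lt hτneg)
      rwa [hpow_rpow i0] at hcmp
    have hB2 : 1/(1-r) ≤ 4 := by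
      rw [div_le_iff₀ (by linarith)]
      linarith
    calc Lam j ≤ ∑ i ∈ Finset.Ico i0 (K+1), r^i := hstep1
      _ ≤ r^i0 * (1/(1-r)) := hstep2
      _ ≤ ((j:ℝ))^τ * 4 := by
          have h6 : (0:ℝ) ≤ 1/(1-r) := le_of_lt (div_pos one_pos (by linarith))
          apply mul_le_mul hA2 hB2 h6 (Real.rpow_nonneg (le_of_lt hjpos) τ)
      _ = 4 * ((j:ℝ))^τ := by ring
  -- Hölder
  set q : ℝ := (h:ℝ)/((h:ℝ)-1) with hqdef
  have hpq : ((h:ℝ)).HolderConjugate q := by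
    have := Real.HolderConjugate.conjExponent hh1
    simpa [Real.conjExponent, hqdef] using this
  have hqpos : 0 < q := hpq.symm.pos
  have hinvq : 1/q = 1 - 1/(h:ℝ) := by
    have hsum : (h:ℝ)⁻¹ + q⁻¹ = 1 := by simpa using hpq.inv_add_inv_eq_inv
    rw [one_div, one_div]
    linarith
  have hq2 : q ≤ 2 := by
    have h2 : (1:ℝ)/2 ≤ 1/q := by rw [hinvq]; linarith
    have h3 : q * (1/q) = 1 := by field_simp
    nlinarith [mul_le_mul_of_nonneg_left h2 (le_of_lt hqpos)]
  have hτq : τ * q = -1 := by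
    have hτ' : τ = -(1/q) := by rw [hτdef]; linarith [hinvq]
    rw [hτ', neg_mul, one_div, inv_mul_cancel₀ (ne_of_gt hqpos)]
  have hHolder : S ≤ (∑ j ∈ Finset.Icc 1 N, ((f j:ℝ))^((h:ℝ)))^(1/(h:ℝ))
      * (∑ j ∈ Finset.Icc 1 N, (Lam j)^q)^(1/q) := by
    rw [hexch]
    have hH := Real.inner_le_Lp_mul_Lq_of_nonneg (Finset.Icc 1 N) hpq
      (fun j _ => Nat.cast_nonneg (f j)) (fun j _ => hLam0 j)
    calc ∑ j ∈ Finset.Icc 1 N, Lam j * (f j:ℝ)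
        = ∑ j ∈ Finset.Icc 1 N, (f j:ℝ) * Lam j := by
          apply Finset.sum_congr rfl; intro j _; ring
      _ ≤ _ := hH
  have hLamq_nonneg : (0:ℝ) ≤ ∑ j ∈ Finset.Icc 1 N, (Lam j)^q :=
    Finset.sum_nonneg fun j _ => Real.rpow_nonneg (hLam0 j) q
  have hLamq : ∑ j ∈ Finset.Icc 1 N, (Lam j)^q ≤ 32 * Lg := by
    have hterm : ∀ j ∈ Finset.Icc 1 N, (Lam j)^q ≤ 16 * ((j:ℝ))⁻¹ := by
      intro j hj
      have hj1 : 1 ≤ j := (Finset.mem_Icc.mp hj).1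
      have hjpos : (0:ℝ) < (j:ℝ) := by exact_mod_cast hj1
      have h1 : (Lam j)^q ≤ (4*((j:ℝ))^τ)^q :=
        Real.rpow_le_rpow (hLam0 j) (hLamUB j hj) (le_of_lt hqpos)
      rw [Real.mul_rpow (by norm_num) (Real.rpow_nonneg (le_of_lt hjpos) τ)] at h1
      rw [← Real.rpow_mul (le_of_lt hjpos)] at h1
      rw [hτq, Real.rpow_neg_one] at h1
      have h4q : (4:ℝ)^q ≤ 16 := by
        have h2 : (4:ℝ)^q ≤ (4:ℝ)^(2:ℝ) :=
          Real.rpow_le_rpow_of_exponent_le (by norm_num) hq2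
        have h3 : (4:ℝ)^(2:ℝ) = 16 := by
          rw [show (2:ℝ) = ((2:ℕ):ℝ) by norm_num, Real.rpow_natCast]
          norm_num
        linarith
      calc (Lam j)^q ≤ (4:ℝ)^q * ((j:ℝ))⁻¹ := h1
        _ ≤ 16 * ((j:ℝ))⁻¹ := by
            apply mul_le_mul_of_nonneg_right h4q (by positivity)
    calc ∑ j ∈ Finset.Icc 1 N, (Lam j)^q
        ≤ ∑ j ∈ Finset.Icc 1 N, 16 * ((j:ℝ))⁻¹ := Finset.sum_le_sum hterm
      _ = 16 * ∑ j ∈ Finset.Icc 1 N, ((j:ℝ))⁻¹ := by rw [Finset.mul_sum]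
      _ ≤ 16 * (1 + Lg) := by
          have := Stmt11Aux.harmonic_upper N
          rw [hLgdef]
          apply mul_le_mul_of_nonneg_left this (by norm_num)
      _ ≤ 32 * Lg := by linarith
  -- final assembly
  have hfin1 : (∑ j ∈ Finset.Icc 1 N, ((f j:ℝ))^((h:ℝ)))^(1/(h:ℝ))
      ≤ (E:ℝ)^(1/(h:ℝ)) * (N:ℝ)^(1-(1:ℝ)/h) := by
    have h1 := Real.rpow_le_rpow hsumfh_nonneg hcapR (le_of_lt heh0)
    rw [Real.mul_rpow (by positivity) (Real.rpow_nonneg (by positivity) _)] at h1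
    rw [← Real.rpow_mul (by positivity : (0:ℝ) ≤ (N:ℝ))] at h1
    have h2 : ((h:ℝ)-1) * (1/(h:ℝ)) = 1 - 1/(h:ℝ) := by field_simp
    rwa [h2] at h1
  have hfin2 : (∑ j ∈ Finset.Icc 1 N, (Lam j)^q)^(1/q) ≤ (32*Lg)^(1/q) :=
    Real.rpow_le_rpow hLamq_nonneg hLamq (by positivity)
  set X : ℝ := (N:ℝ)^(1-(1:ℝ)/h) with hXdef
  have hX0 : 0 < X := Real.rpow_pos_of_pos (by positivity) _
  have hmain : ((32*(E:ℝ)+1) * (2*Lg)^(-(1:ℝ)/h) * X) * Lg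
      ≤ ((E:ℝ)^(1/(h:ℝ)) * X) * (32*Lg)^(1/q) := by
    calc ((32*(E:ℝ)+1) * (2*Lg)^(-(1:ℝ)/h) * X) * Lg ≤ S := hSlow
      _ ≤ (∑ j ∈ Finset.Icc 1 N, ((f j:ℝ))^((h:ℝ)))^(1/(h:ℝ))
          * (∑ j ∈ Finset.Icc 1 N, (Lam j)^q)^(1/q) := hHolder
      _ ≤ ((E:ℝ)^(1/(h:ℝ)) * X) * (32*Lg)^(1/q) := by
          apply mul_le_mul hfin1 hfin2
            (Real.rpow_nonneg hLamq_nonneg _)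
            (mul_nonneg (Real.rpow_nonneg (by positivity) _) (le_of_lt hX0))
  have hmain2 : (32*(E:ℝ)+1) * (2*Lg)^(-(1:ℝ)/h) * Lg
      ≤ (E:ℝ)^(1/(h:ℝ)) * (32*Lg)^(1/q) := by
    apply le_of_mul_le_mul_right _ hX0
    calc ((32*(E:ℝ)+1) * (2*Lg)^(-(1:ℝ)/h) * Lg) * X
        = ((32*(E:ℝ)+1) * (2*Lg)^(-(1:ℝ)/h) * X) * Lg := by ring
      _ ≤ ((E:ℝ)^(1/(h:ℝ)) * X) * (32*Lg)^(1/q) := hmain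
      _ = ((E:ℝ)^(1/(h:ℝ)) * (32*Lg)^(1/q)) * X := by ring
  have hcancel : (2*Lg)^(-(1:ℝ)/h) * (2*Lg)^((1:ℝ)/h) = 1 := by
    have h0 : (0:ℝ) < 2*Lg := by linarith
    have hz : -(1:ℝ)/h + (1:ℝ)/h = 0 := by ring
    calc (2*Lg)^(-(1:ℝ)/h) * (2*Lg)^((1:ℝ)/h)
        = (2*Lg)^(-(1:ℝ)/h + (1:ℝ)/h) := (Real.rpow_add h0 _ _).symm
      _ = (2*Lg)^(0:ℝ) := by rw [hz]
      _ = 1 := Real.rpow_zero _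
  have hmul : (32*(E:ℝ)+1) * Lg
      ≤ (E:ℝ)^(1/(h:ℝ)) * (32*Lg)^(1/q) * (2*Lg)^((1:ℝ)/h) := by
    have h0 : (0:ℝ) < (2*Lg)^((1:ℝ)/h) := Real.rpow_pos_of_pos (by linarith) _
    have h1 := mul_le_mul_of_nonneg_right hmain2 (le_of_lt h0)
    calc (32*(E:ℝ)+1) * Lg
        = ((32*(E:ℝ)+1) * Lg) * ((2*Lg)^(-(1:ℝ)/h) * (2*Lg)^((1:ℝ)/h)) := by
          rw [hcancel, mul_one]
      _ = ((32*(E:ℝ)+1) * (2*Lg)^(-(1:ℝ)/h) * Lg) * (2*Lg)^((1:ℝ)/h) := by ring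
      _ ≤ ((E:ℝ)^(1/(h:ℝ)) * (32*Lg)^(1/q)) * (2*Lg)^((1:ℝ)/h) := h1
      _ = (E:ℝ)^(1/(h:ℝ)) * (32*Lg)^(1/q) * (2*Lg)^((1:ℝ)/h) := by ring
  have hrhs : (32*Lg)^(1/q) * (2*Lg)^((1:ℝ)/h) ≤ 32*Lg := by
    have h1 : (2*Lg)^((1:ℝ)/h) ≤ (32*Lg)^((1:ℝ)/h) :=
      Real.rpow_le_rpow (by linarith) (by linarith) (by positivity)
    have h2 : (32*Lg)^(1/q) * (32*Lg)^((1:ℝ)/h) = 32*Lg := by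
      rw [← Real.rpow_add (by linarith : (0:ℝ) < 32*Lg)]
      have h3 : 1/q + (1:ℝ)/h = 1 := by rw [hinvq]; ring
      rw [h3, Real.rpow_one]
    calc (32*Lg)^(1/q) * (2*Lg)^((1:ℝ)/h)
        ≤ (32*Lg)^(1/q) * (32*Lg)^((1:ℝ)/h) := by
          apply mul_le_mul_of_nonneg_left h1 (Real.rpow_nonneg (by linarith) _)
      _ = 32*Lg := h2
  have hEE : (E:ℝ)^(1/(h:ℝ)) ≤ (E:ℝ) := by
    have h1 : (E:ℝ)^(1/(h:ℝ)) ≤ (E:ℝ)^(1:ℝ) := by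
      apply Real.rpow_le_rpow_of_exponent_le (by exact_mod_cast hE1)
      rw [div_le_one hhpos]
      linarith
    rwa [Real.rpow_one] at h1
  have hfinal : (32*(E:ℝ)+1) * Lg ≤ 32*(E:ℝ) * Lg := by
    calc (32*(E:ℝ)+1) * Lg
        ≤ (E:ℝ)^(1/(h:ℝ)) * ((32*Lg)^(1/q) * (2*Lg)^((1:ℝ)/h)) := by
          rw [← mul_assoc]; exact hmul
      _ ≤ (E:ℝ)^(1/(h:ℝ)) * (32*Lg) := by
          apply mul_le_mul_of_nonneg_left hrhs (Real.rpow_nonneg (by positivity) _)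
      _ ≤ (E:ℝ) * (32*Lg) := by
          apply mul_le_mul_of_nonneg_right hEE (by linarith)
      _ = 32*(E:ℝ)*Lg := by ring
  nlinarith [hfinal, hLg1]
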